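/- Let X be a bipartite mixed graph with a unique perfect matching, with n vertices. Then det(H_α) = (−1)^{n/2}, where H_α is the α-hermitian adjacency matrix of X. -/

import Mathlib

open SimpleGraph
open scoped Classical

noncomputable section

variable {V : Type*}

structure MixedGraph (V : Type*) where
  digon : V → V → Prop
  arc : V → V → Prop
  digon_symm : ∀ u v, digon u v → digon v u
  digon_irrefl : ∀ v, ¬ digon v v
  arc_irrefl : ∀ v, ¬ arc v v
  arc_asymm : ∀ u v, arc u v → ¬ arc v u
  digon_arc : ∀ u v, digon u v → ¬ arc u v ∧ ¬ arc v u

def MixedGraph.underlying (X : MixedGraph V) : SimpleGraph V where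
  Adj u v := X.digon u v ∨ X.arc u v ∨ X.arc v u
  symm := by
    refine ⟨?_⟩
    intro u v h
    rcases h with h | h | h
    · exact Or.inl (X.digon_symm u v h)
    · exact Or.inr (Or.inr h)
    · exact Or.inr (Or.inl h)
  loopless := by
    refine ⟨?_⟩
    intro v h
    rcases h with h | h | h
    · exact X.digon_irrefl v h
    · exact X.arc_irrefl v h
    · exact X.arc_irrefl v h

/-- The α-hermitian adjacency matrix of a mixed graph. -/
def Halpha (X : MixedGraph V) (α : ℂ) : Matrix V V ℂ := fun u v =>
  if X.digon u v then 1
  else if X.arc u v then α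
  else if X.arc v u then (starRingEnd ℂ) α
  else 0

/-- The value h_α of a walk: product of matrix entries along consecutive vertices. -/
def hWalk (X : MixedGraph V) (α : ℂ) {u v : V} (p : X.underlying.Walk u v) : ℂ :=
  (p.darts.map (fun d => Halpha X α d.toProd.1 d.toProd.2)).prod

/-- A co-augmenting path w.r.t. a matching edge set `M`: a path whose edges alternate
matching / non-matching, beginning and ending with matching edges. -/
def IsCoAugmenting (G : SimpleGraph V) (M : Set (Sym2 V)) {u v : V} (p : G.Walk u v) : Prop :=
  p.IsPath ∧ Odd p.edges.length ∧
    ∀ i : Fin p.edges.length, (p.edges.get i ∈ M ↔ Even i.val)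

/-- `G` is unicyclic: connected with exactly one cycle (all cycles have the same edge set). -/
def IsUnicyclic (G : SimpleGraph V) : Prop :=
  G.Connected ∧ (∃ (u : V) (c : G.Walk u u), c.IsCycle) ∧
    ∀ (u v : V) (c : G.Walk u u) (d : G.Walk v v), c.IsCycle → d.IsCycle →
      {e | e ∈ c.edges} = {e | e ∈ d.edges}

/-- A peg: a matching edge incident to a vertex of the cycle `c` but not an edge of `c`. -/
def IsPeg (G : SimpleGraph V) (M : G.Subgraph) {u : V} (c : G.Walk u u) (e : Sym2 V) : Prop :=
  e ∈ M.edgeSet ∧ e ∉ c.edges ∧ ∃ x ∈ c.support, x ∈ e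

/-- Restriction of a matching to an induced subgraph. -/
def restrictMatching (G : SimpleGraph V) (M : G.Subgraph) (s : Set V) :
    (G.induce s).Subgraph where
  verts := Set.univ
  Adj a b := M.Adj a.1 b.1
  adj_sub h := M.adj_sub h
  edge_vert _ := Set.mem_univ _
  symm := ⟨fun _ _ h => M.adj_symm h⟩

/-- The sign `f_W` at the end of a walk: starts at 1 and flips across non-matching edges. -/
def fEnd (G : SimpleGraph V) (M : Set (Sym2 V)) : ∀ {u v : V}, G.Walk u v → ℤ
  | _, _, SimpleGraph.Walk.nil => 1
  | _, _, @SimpleGraph.Walk.cons _ _ u w _ _ p =>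
      if s(u, w) ∈ M then fEnd G M p else - fEnd G M p

lemma Halpha.adj_of_ne_zero (X : MixedGraph V) (α : ℂ) {u v : V}
    (h : Halpha X α u v ≠ 0) : X.underlying.Adj u v := by
  by_contra hadj
  apply h
  simp only [MixedGraph.underlying, not_or] at hadj
  simp [Halpha, hadj.1, hadj.2.1, hadj.2.2]

lemma Halpha.mul_rev (X : MixedGraph V) (α : ℂ) (hα : ‖α‖ = 1) {u v : V}
    (h : X.underlying.Adj u v) : Halpha X α u v * Halpha X α v u = 1 := by
  have hc : α * (starRingEnd ℂ) α = 1 := by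
    rw [Complex.mul_conj]
    norm_cast
    rw [Complex.normSq_eq_norm_sq, hα]; norm_num
  rcases h with hd | ha | ha
  · simp [Halpha, hd, X.digon_symm u v hd]
  · have h1 : ¬ X.digon u v := fun hd => (X.digon_arc u v hd).1 ha
    have h2 : ¬ X.digon v u := fun hd => (X.digon_arc v u hd).2 ha
    have h3 : ¬ X.arc v u := X.arc_asymm u v ha
    simp only [Halpha, if_neg h1, if_pos ha, if_neg h2, if_neg h3]
    exact hc
  · have h1 : ¬ X.digon u v := fun hd => (X.digon_arc u v hd).2 ha
    have h2 : ¬ X.digon v u := fun hd => (X.digon_arc v u hd).1 ha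
    have h3 : ¬ X.arc u v := X.arc_asymm v u ha
    simp only [Halpha, if_neg h1, if_neg h3, if_pos ha, if_neg h2]
    rw [mul_comm]; exact hc

/-- Given a 2-coloring and a permutation moving every vertex along an edge,
there is a perfect matching pairing each 0-colored vertex with its image. -/
lemma matching_of_perm [Fintype V] (X : MixedGraph V)
    (C : X.underlying.Coloring (Fin 2)) (σ : Equiv.Perm V)
    (hσ : ∀ v, X.underlying.Adj (σ v) v) :
    ∃ N : X.underlying.Subgraph, N.IsPerfectMatching ∧
      ∀ v, C v = 0 → N.Adj v (σ v) := by
  have hclr : ∀ v, C (σ v) ≠ C v := fun v => C.valid (hσ v)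
  refine ⟨⟨Set.univ,
      fun u v => X.underlying.Adj u v ∧ ((C u = 0 ∧ σ u = v) ∨ (C v = 0 ∧ σ v = u)),
      fun h => h.1, fun _ => Set.mem_univ _,
      ⟨fun u v h => ⟨h.1.symm, h.2.symm.imp id id⟩⟩⟩, ?_, ?_⟩
  · constructor
    · intro v _
      by_cases h0 : C v = 0
      · refine ⟨σ v, ⟨(hσ v).symm, Or.inl ⟨h0, rfl⟩⟩, ?_⟩
        rintro w ⟨hadj, (⟨_, e⟩ | ⟨hw0, e⟩)⟩
        · exact e.symm
        · exact absurd (e ▸ h0) (fun hh => hclr w (hh.trans hw0.symm))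
      · refine ⟨σ⁻¹ v, ⟨?_, Or.inr ⟨?_, Equiv.Perm.eq_inv_iff_eq.mp rfl⟩⟩, ?_⟩
        · have := hσ (σ⁻¹ v)
          rwa [(Equiv.Perm.eq_inv_iff_eq.mp rfl : σ (σ⁻¹ v) = v)] at this
        · have h1 : C v = 1 := by omega
          have := hclr (σ⁻¹ v)
          rw [(Equiv.Perm.eq_inv_iff_eq.mp rfl : σ (σ⁻¹ v) = v), h1] at this
          omega
        · rintro w ⟨hadj, (⟨hv0, _⟩ | ⟨_, e⟩)⟩
          · exact absurd hv0 h0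
          · rw [← e, (Equiv.Perm.inv_eq_iff_eq.mpr rfl : σ⁻¹ (σ w) = w)]
    · intro v; exact Set.mem_univ v
  · intro v h0
    exact ⟨(hσ v).symm, Or.inl ⟨h0, rfl⟩⟩

lemma sign_of_fpf_involution [Fintype V] [DecidableEq V] (σ : Equiv.Perm V)
    (h2 : σ * σ = 1) (hf : ∀ v, σ v ≠ v) :
    ∃ k, Fintype.card V = 2 * k ∧ Equiv.Perm.sign σ = (-1) ^ k := by
  have hsupp : σ.support = Finset.univ := by
    ext v; simp [Equiv.Perm.mem_support, hf v]
  have hall : ∀ n ∈ σ.cycleType, n = 2 := by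
    intro n hn
    have h1 : 2 ≤ n := Equiv.Perm.two_le_of_mem_cycleType hn
    have h2' : n ∣ 2 := by
      refine (Equiv.Perm.dvd_of_mem_cycleType hn).trans ?_
      exact orderOf_dvd_of_pow_eq_one (by rw [pow_two]; exact h2)
    exact le_antisymm (Nat.le_of_dvd two_pos h2') h1
  have hrep : σ.cycleType = Multiset.replicate (Multiset.card σ.cycleType) 2 :=
    (Multiset.eq_replicate_card).2 hall
  refine ⟨Multiset.card σ.cycleType, ?_, ?_⟩
  · have := σ.sum_cycleType
    rw [hsupp, Finset.card_univ, hrep, Multiset.sum_replicate, smul_eq_mul] at this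
    omega
  · rw [Equiv.Perm.sign_of_cycleType, hrep]
    simp only [Multiset.sum_replicate, Multiset.card_replicate, smul_eq_mul]
    rw [pow_add, pow_mul]
    norm_num

end

private lemma fin2_eq_zero (a b : Fin 2) (h : a ≠ b) (h0 : b ≠ 0) : a = 0 := by
  fin_cases a <;> fin_cases b <;> simp_all

/-- For a bipartite mixed graph with a unique perfect matching on n vertices,
det(H_α) = (−1)^{n/2}. -/
theorem stmt7 {V : Type*} [Fintype V] [DecidableEq V]
    (X : MixedGraph V) (α : ℂ) (hα : ‖α‖ = 1)
    (hbip : X.underlying.Colorable 2)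
    (M : X.underlying.Subgraph) (hM : M.IsPerfectMatching)
    (huniq : ∀ N : X.underlying.Subgraph, N.IsPerfectMatching → N = M) :
    (Halpha X α).det = (-1 : ℂ) ^ (Fintype.card V / 2) := by
  classical
  obtain ⟨C⟩ := hbip
  have hEU : ∀ v : V, ∃! w, M.Adj v w := fun v => hM.1 (hM.2 v)
  choose f hf hu using hEU
  have hff : ∀ v, f (f v) = v := fun v => (hu (f v) v (M.adj_symm (hf v))).symm
  have hadjf : ∀ v, X.underlying.Adj v (f v) := fun v => M.adj_sub (hf v)
  have finv : Function.Involutive f := hff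
  set σ0 : Equiv.Perm V := Function.Involutive.toPerm f finv with hσ0
  have hσ0v : ∀ v, σ0 v = f v := fun _ => rfl
  -- sign of σ0
  have hsq : σ0 * σ0 = 1 := by
    ext v
    simp [hσ0v, hff]
  have hfne : ∀ v, σ0 v ≠ v := by
    intro v
    rw [hσ0v]
    exact (hadjf v).ne'
  obtain ⟨k, hk, hsgn⟩ := sign_of_fpf_involution σ0 hsq hfne
  have hk2 : Fintype.card V / 2 = k := by omega
  rw [Matrix.det_apply]
  rw [Finset.sum_eq_single_of_mem σ0 (Finset.mem_univ _)]
  · have hprod : ∏ v, Halpha X α (σ0 v) v = 1 := by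
      refine Finset.prod_ninvolution f ?_ (fun a _ => hfne a)
        (fun a => Finset.mem_univ _) hff
      intro a
      rw [hσ0v, hσ0v, hff]
      exact Halpha.mul_rev X α hα (hadjf a).symm
    rw [hprod, hsgn, hk2]
    simp only [Units.smul_def, zsmul_eq_mul, mul_one]
    push_cast
    ring
  · intro b _ hb
    by_contra hterm
    have hprod_ne : ∏ v, Halpha X α (b v) v ≠ 0 := by
      intro h0
      apply hterm
      rw [h0, smul_zero]
    have hadj : ∀ v, X.underlying.Adj (b v) v := by
      intro v
      refine Halpha.adj_of_ne_zero X α ?_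
      exact Finset.prod_ne_zero_iff.mp hprod_ne v (Finset.mem_univ v)
    have hadj' : ∀ v, X.underlying.Adj (b⁻¹ v) v := by
      intro v
      have := (hadj (b⁻¹ v)).symm
      rwa [(Equiv.Perm.eq_inv_iff_eq.mp rfl : b (b⁻¹ v) = v)] at this
    obtain ⟨N, hN, hN0⟩ := matching_of_perm X C b hadj
    obtain ⟨N', hN', hN0'⟩ := matching_of_perm X C b⁻¹ hadj'
    have hNM := huniq N hN
    have hNM' := huniq N' hN'
    apply hb
    ext v
    rw [hσ0v]
    by_cases h0 : C v = 0
    · exact hu v (b v) (hNM ▸ hN0 v h0)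
    · -- C v ≠ 0 : use the f v, which is 0-colored
      have hCf : C (f v) = 0 := fin2_eq_zero (C (f v)) (C v) (C.valid (hadjf v).symm) h0
      have : M.Adj (f v) (b⁻¹ (f v)) := hNM' ▸ hN0' (f v) hCf
      have e : b⁻¹ (f v) = f (f v) := hu (f v) _ this
      rw [hff] at e
      exact ((Equiv.Perm.eq_inv_iff_eq.mp rfl : b (b⁻¹ (f v)) = f v).symm.trans (congrArg b e)).symm
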